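/- Let O be a Dedekind domain with fraction field K, μ a non-principal ideal with μ² = (z), and A = O·1 ⊕ μ·X with multiplication X² = z⁻¹ā·X + z⁻¹b̄ where ā ∈ O and b̄ ∈ O^×. Define ε : A → O by ε(1) = λ and ε(uX) = 0 for u ∈ μ, where λ ∈ O^×. Then ε is a nondegenerate trace, i.e., the map ε̃ : A → Hom_O(A, O) given by ε̃(x)(y) = ε(xy) is an isomorphism of O-modules. -/

import Mathlib

def qmul {K : Type*} [Field K] (a b : K) (p q : K × K) : K × K :=
  (p.1 * q.1 + b * (p.2 * q.2), p.1 * q.2 + p.2 * q.1 + a * (p.2 * q.2))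

private theorem key {O : Type*} [CommRing O] (μ : Ideal O) (z : O) (hz : z ∈ μ * μ)
    (ψ : μ →ₗ[O] O) : ∃ s, s ∈ μ ∧ ∀ t (ht : t ∈ μ), s * t = z * ψ ⟨t, ht⟩ := by
  refine Submodule.mul_induction_on hz ?_ ?_
  · intro p hp q hq
    refine ⟨p * ψ ⟨q, hq⟩, μ.mul_mem_right _ hp, fun t ht => ?_⟩
    have h1 : ψ ⟨t * q, μ.mul_mem_left t hq⟩ = t * ψ ⟨q, hq⟩ := by
      have := ψ.map_smul t ⟨q, hq⟩
      simpa [Subtype.ext_iff, smul_eq_mul] using this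
    have h2 : ψ ⟨q * t, μ.mul_mem_left q ht⟩ = q * ψ ⟨t, ht⟩ := by
      have := ψ.map_smul q ⟨t, ht⟩
      simpa [Subtype.ext_iff, smul_eq_mul] using this
    have h3 : ψ ⟨t * q, μ.mul_mem_left t hq⟩ = ψ ⟨q * t, μ.mul_mem_left q ht⟩ := by
      congr 1; exact Subtype.ext (mul_comm t q)
    calc p * ψ ⟨q, hq⟩ * t = p * (t * ψ ⟨q, hq⟩) := by ring
    _ = p * (q * ψ ⟨t, ht⟩) := by rw [← h1, h3, h2]
    _ = p * q * ψ ⟨t, ht⟩ := by ring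
  · rintro x y ⟨s1, hs1, h1⟩ ⟨s2, hs2, h2⟩
    exact ⟨s1 + s2, μ.add_mem hs1 hs2, fun t ht => by rw [add_mul, h1 t ht, h2 t ht, add_mul]⟩


theorem stmt6 (O : Type*) [CommRing O] [IsDomain O] [IsDedekindDomain O]
    (K : Type*) [Field K] [Algebra O K] [IsFractionRing O K]
    (μ : Ideal O) (hnp : ¬ Submodule.IsPrincipal μ)
    (z : O) (hsq : μ * μ = Ideal.span {z})
    (abar : O) (bbar lam : Oˣ) :
    let f : O → K := algebraMap O K
    let a : K := f abar / f z
    let b : K := f bbar / f z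
    let O1 : Submodule O K := LinearMap.range (Algebra.linearMap O K)
    let μK : Submodule O K := Submodule.map (Algebra.linearMap O K) μ
    let A : Submodule O (K × K) := O1.prod μK
    let ε : K × K → K := fun p => f lam * p.1
    (∀ p : A, ε (p : K × K) ∈ O1) ∧
    (∀ φ : A →ₗ[O] O, ∃! x : A, ∀ y : A,
        f (φ y) = ε (qmul a b (x : K × K) (y : K × K))) := by
  intro f a b O1 μK A ε
  have finj : Function.Injective f := IsFractionRing.injective O K
  have hμbot : μ ≠ ⊥ := fun h => hnp (h ▸ ⟨⟨0, (Ideal.span_singleton_eq_bot.mpr rfl).symm⟩⟩)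
  have hz0 : z ≠ 0 := by
    intro h
    subst h
    rw [Ideal.span_singleton_eq_bot.mpr rfl, Ideal.mul_eq_bot] at hsq
    exact hμbot (hsq.elim id id)
  have fz0 : f z ≠ 0 := fun h => hz0 (finj (by show f z = f 0; rw [show f 0 = 0 from map_zero _]; exact h))
  have flam0 : f lam ≠ 0 := fun h => lam.ne_zero (finj (by show f lam = f 0; rw [show f (0:O) = 0 from map_zero _]; exact h))
  have hb0 : b ≠ 0 := div_ne_zero (fun h => bbar.ne_zero (finj (by show f bbar = f 0; rw [show f (0:O) = 0 from map_zero _]; exact h))) fz0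
  have he1 : ((1 : K), (0 : K)) ∈ A := ⟨⟨1, map_one (algebraMap O K)⟩, μK.zero_mem⟩
  have hmem : ∀ t ∈ μ, ((0 : K), f t) ∈ A := fun t ht => ⟨O1.zero_mem, Submodule.mem_map_of_mem ht⟩
  set e1A : A := ⟨((1 : K), (0 : K)), he1⟩ with he1A
  have jadd : ∀ (s t : μ), (⟨((0:K), f ↑(s+t)), hmem _ (s+t).2⟩ : A) = ⟨((0:K), f s), hmem _ s.2⟩ + ⟨((0:K), f t), hmem _ t.2⟩ := by
    intro s t
    apply Subtype.ext
    show ((0:K), f ↑(s+t)) = ((0:K), f s) + ((0:K), f t)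
    exact Prod.ext (by simp) (map_add (algebraMap O K) (s:O) (t:O))
  have jsmul : ∀ (r : O) (t : μ), (⟨((0:K), f ↑(r • t)), hmem _ (r • t).2⟩ : A) = r • ⟨((0:K), f t), hmem _ t.2⟩ := by
    intro r t
    apply Subtype.ext
    show ((0:K), f ↑(r • t)) = r • (((0:K), f t) : K × K)
    have : f ↑(r • t) = r • f ↑t := by
      show algebraMap O K (r * ↑t) = r • algebraMap O K ↑t
      rw [map_mul, Algebra.smul_def]
    exact Prod.ext (by simp) this
  constructor
  · rintro ⟨⟨p1, p2⟩, ⟨⟨u, hu⟩, hp2⟩⟩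
    refine ⟨lam * u, ?_⟩
    show algebraMap O K (↑lam * u) = f ↑lam * p1
    rw [map_mul]
    exact congrArg (f ↑lam * ·) hu
  intro φ
  set jmap : μ →ₗ[O] A :=
    { toFun := fun t => ⟨((0:K), f ↑t), hmem _ t.2⟩
      map_add' := jadd
      map_smul' := fun r t => jsmul r t } with hjmap
  set ψ : μ →ₗ[O] O := φ.comp jmap with hψ
  set c : O := (((lam * bbar)⁻¹ : Oˣ) : O) with hc
  obtain ⟨s, hs, hst⟩ := key μ z (hsq ▸ Ideal.mem_span_singleton_self z) (c • ψ)
  set u : O := (↑lam⁻¹ : O) * φ e1A with hu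
  have hxA : ((f u, f s) : K × K) ∈ A := ⟨⟨u, rfl⟩, Submodule.mem_map_of_mem hs⟩
  have main : ∀ y : A, f (φ y) = ε (qmul a b ((f u, f s) : K × K) (y : K × K)) := by
    rintro ⟨⟨y1, y2⟩, ⟨⟨v, hv⟩, hy2⟩⟩
    obtain ⟨t, ht, hft⟩ := hy2
    set P : O := ψ ⟨t, ht⟩ with hP
    have hyA : (⟨(y1, y2), ⟨⟨v, hv⟩, ⟨t, ht, hft⟩⟩⟩ : A) = v • e1A + jmap ⟨t, ht⟩ := by
      apply Subtype.ext
      show (y1, y2) = v • ((1:K), (0:K)) + ((0:K), f t)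
      refine Prod.ext ?_ ?_
      · show y1 = v • (1:K) + 0
        rw [Algebra.smul_def, mul_one, add_zero]
        exact hv.symm
      · show y2 = v • (0:K) + f t
        rw [smul_zero, zero_add]
        exact hft.symm
    have hφy : φ ⟨(y1, y2), ⟨⟨v, hv⟩, ⟨t, ht, hft⟩⟩⟩ = v * φ e1A + P := by
      rw [hyA, map_add, map_smul, smul_eq_mul]
      rfl
    have h1 : (↑lam : O) * u = φ e1A := by
      rw [hu, ← mul_assoc, Units.mul_inv, one_mul]
    have h2 : (↑lam : O) * (↑bbar * c) = 1 := by
      rw [hc, ← mul_assoc, ← Units.val_mul]; exact Units.mul_inv _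
    have hOid : v * φ e1A + P = ↑lam * (u * v + ↑bbar * (c * P)) := by
      linear_combination (-v) * h1 - P * h2
    have hstK : f s * f t = f z * (f c * f P) := by
      show algebraMap O K s * algebraMap O K t = algebraMap O K z * (algebraMap O K c * algebraMap O K P)
      rw [← map_mul, ← map_mul, ← map_mul, hst t ht]
      norm_num [hP, smul_eq_mul, mul_assoc]
    show algebraMap O K (φ _) = ε (qmul a b (f u, f s) (y1, y2))
    rw [hφy, hOid]
    show algebraMap O K _ = f ↑lam * (f u * y1 + b * (f s * y2))
    have hv' : algebraMap O K v = y1 := hv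
    have hft' : algebraMap O K t = y2 := hft
    rw [← hv', ← hft']
    show algebraMap O K _ = algebraMap O K ↑lam * (algebraMap O K u * algebraMap O K v + b * (f s * f t))
    rw [hstK]
    show algebraMap O K (↑lam * (u * v + ↑bbar * (c * P)))
      = algebraMap O K ↑lam * (algebraMap O K u * algebraMap O K v
        + algebraMap O K ↑bbar / algebraMap O K z * (algebraMap O K z * (algebraMap O K c * algebraMap O K P)))
    have hz' : algebraMap O K z ≠ 0 := fz0
    field_simp
    simp only [map_add, map_mul]
    field_simp
  refine ⟨⟨(f u, f s), hxA⟩, main, ?_⟩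
  rintro ⟨⟨x1, x2⟩, hx'⟩ hmain'
  have hboth : ∀ y : A, ε (qmul a b ((x1, x2) : K × K) (y : K × K)) = ε (qmul a b ((f u, f s) : K × K) (y : K × K)) := by
    intro y
    rw [← hmain' y, ← main y]
  apply Subtype.ext
  refine Prod.ext ?_ ?_
  · have := hboth e1A
    simp only [qmul, ε] at this
    have h := mul_left_cancel₀ flam0 this
    simpa [he1A] using h
  · obtain ⟨t0, ht0, ht0ne⟩ := Submodule.exists_mem_ne_zero_of_ne_bot hμbot
    have ft0 : f t0 ≠ 0 := fun h => ht0ne (finj (by show f t0 = f 0; rw [show f (0:O) = 0 from map_zero _]; exact h))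
    have := hboth ⟨((0:K), f t0), hmem _ ht0⟩
    simp only [qmul, ε] at this
    have h : f ↑lam * (b * (x2 * f t0)) = f ↑lam * (b * (f s * f t0)) := by
      linear_combination this
    have h2 := mul_left_cancel₀ flam0 h
    have h3 := mul_left_cancel₀ hb0 h2
    exact mul_right_cancel₀ ft0 h3
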